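/- In the symmetric group on {1,…,48}, let σ₀ = (1,10)(11,14)(15,8)(4,5)(2,21)(3,17)(20,6)(7,31)(30,16)(27,13)(22,9)(12,26)(25,39)(28,42)(43,29)(32,46)(47,19)(18,33)(24,34)(23,38)(35,37)(40,41)(44,45)(36,48) and let σ₁ be the product of the twelve 4-cycles (4i+1, 4i+2, 4i+3, 4i+4) for i = 0,…,11. Then σ₀ is a fixed-point-free involution, σ₁⁴ = 1, and the subgroup generated by σ₀ and σ₁ acts transitively on {1,…,48}. -/

import Mathlib

set_option maxRecDepth 20000


/-- Permutation representation for the cuboctahedron (H4, 48 darts): σ₀ is a fixed-point-free involution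
on {1,…,48}, σ₁^4 = 1, and the subgroup generated by σ₀ and σ₁ acts transitively on
{1,…,48}. -/
theorem cuboctahedron_permutation_representation (σ₀ σ₁ : Equiv.Perm ℕ)
    (hσ₀ : σ₀ = Equiv.swap 1 10 *
      Equiv.swap 11 14 *
      Equiv.swap 15 8 *
      Equiv.swap 4 5 *
      Equiv.swap 2 21 *
      Equiv.swap 3 17 *
      Equiv.swap 20 6 *
      Equiv.swap 7 31 *
      Equiv.swap 30 16 *
      Equiv.swap 27 13 *
      Equiv.swap 22 9 *
      Equiv.swap 12 26 *
      Equiv.swap 25 39 *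
      Equiv.swap 28 42 *
      Equiv.swap 43 29 *
      Equiv.swap 32 46 *
      Equiv.swap 47 19 *
      Equiv.swap 18 33 *
      Equiv.swap 24 34 *
      Equiv.swap 23 38 *
      Equiv.swap 35 37 *
      Equiv.swap 40 41 *
      Equiv.swap 44 45 *
      Equiv.swap 36 48)
    (hσ₁ : σ₁ = ([1, 2, 3, 4] : List ℕ).formPerm *
      ([5, 6, 7, 8] : List ℕ).formPerm *
      ([9, 10, 11, 12] : List ℕ).formPerm *
      ([13, 14, 15, 16] : List ℕ).formPerm *
      ([17, 18, 19, 20] : List ℕ).formPerm *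
      ([21, 22, 23, 24] : List ℕ).formPerm *
      ([25, 26, 27, 28] : List ℕ).formPerm *
      ([29, 30, 31, 32] : List ℕ).formPerm *
      ([33, 34, 35, 36] : List ℕ).formPerm *
      ([37, 38, 39, 40] : List ℕ).formPerm *
      ([41, 42, 43, 44] : List ℕ).formPerm *
      ([45, 46, 47, 48] : List ℕ).formPerm) :
    σ₀ * σ₀ = 1 ∧ (∀ x ∈ Finset.Icc 1 48, σ₀ x ≠ x) ∧ σ₁ ^ 4 = 1 ∧
    ∀ a ∈ Finset.Icc 1 48, ∀ b ∈ Finset.Icc 1 48,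
      ∃ g ∈ Subgroup.closure ({σ₀, σ₁} : Set (Equiv.Perm ℕ)), g a = b := by
  refine ⟨?_, ?_, ?_, ?_⟩
  · ext x
    by_cases hx : 1 ≤ x ∧ x ≤ 48
    · obtain ⟨h1, h2⟩ := hx
      rw [hσ₀]
      interval_cases x <;> decide
    · rw [not_and_or, not_le, not_le] at hx
      rw [hσ₀]
      simp (disch := omega) only [Equiv.Perm.mul_apply, Equiv.Perm.one_apply,
        Equiv.swap_apply_of_ne_of_ne]
  · intro x hx
    rw [Finset.mem_Icc] at hx
    obtain ⟨h1, h2⟩ := hx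
    rw [hσ₀]
    interval_cases x <;> decide
  · ext x
    by_cases hx : 1 ≤ x ∧ x ≤ 48
    · obtain ⟨h1, h2⟩ := hx
      rw [hσ₁]
      interval_cases x <;> decide
    · rw [not_and_or, not_le, not_le] at hx
      rw [hσ₁]
      have m0 : x ∉ ([1, 2, 3, 4] : List ℕ) := by simp; omega
      have m1 : x ∉ ([5, 6, 7, 8] : List ℕ) := by simp; omega
      have m2 : x ∉ ([9, 10, 11, 12] : List ℕ) := by simp; omega
      have m3 : x ∉ ([13, 14, 15, 16] : List ℕ) := by simp; omega
      have m4 : x ∉ ([17, 18, 19, 20] : List ℕ) := by simp; omega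
      have m5 : x ∉ ([21, 22, 23, 24] : List ℕ) := by simp; omega
      have m6 : x ∉ ([25, 26, 27, 28] : List ℕ) := by simp; omega
      have m7 : x ∉ ([29, 30, 31, 32] : List ℕ) := by simp; omega
      have m8 : x ∉ ([33, 34, 35, 36] : List ℕ) := by simp; omega
      have m9 : x ∉ ([37, 38, 39, 40] : List ℕ) := by simp; omega
      have m10 : x ∉ ([41, 42, 43, 44] : List ℕ) := by simp; omega
      have m11 : x ∉ ([45, 46, 47, 48] : List ℕ) := by simp; omega
      simp only [pow_succ, pow_zero, one_mul, Equiv.Perm.mul_apply, Equiv.Perm.one_apply,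
        List.formPerm_apply_of_notMem m0, List.formPerm_apply_of_notMem m1, List.formPerm_apply_of_notMem m2, List.formPerm_apply_of_notMem m3, List.formPerm_apply_of_notMem m4, List.formPerm_apply_of_notMem m5, List.formPerm_apply_of_notMem m6, List.formPerm_apply_of_notMem m7, List.formPerm_apply_of_notMem m8, List.formPerm_apply_of_notMem m9, List.formPerm_apply_of_notMem m10, List.formPerm_apply_of_notMem m11]
  · have h0m : σ₀ ∈ Subgroup.closure ({σ₀, σ₁} : Set (Equiv.Perm ℕ)) :=
      Subgroup.subset_closure (Set.mem_insert _ _)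
    have h1m : σ₁ ∈ Subgroup.closure ({σ₀, σ₁} : Set (Equiv.Perm ℕ)) :=
      Subgroup.subset_closure (Set.mem_insert_of_mem _ rfl)
    have hstep : ∀ σ : Equiv.Perm ℕ, σ ∈ Subgroup.closure ({σ₀, σ₁} : Set (Equiv.Perm ℕ)) →
        ∀ m n : ℕ, σ m = n →
        (∃ g ∈ Subgroup.closure ({σ₀, σ₁} : Set (Equiv.Perm ℕ)), g 1 = m) →
        ∃ g ∈ Subgroup.closure ({σ₀, σ₁} : Set (Equiv.Perm ℕ)), g 1 = n := by
      rintro σ hσ m n hmn ⟨g, hg, hg1⟩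
      exact ⟨σ * g, mul_mem hσ hg, by rw [Equiv.Perm.mul_apply, hg1, hmn]⟩
    have hr : ∀ n ∈ Finset.Icc 1 48,
        ∃ g ∈ Subgroup.closure ({σ₀, σ₁} : Set (Equiv.Perm ℕ)), g 1 = n := by
      have r1 : ∃ g ∈ Subgroup.closure ({σ₀, σ₁} : Set (Equiv.Perm ℕ)), g 1 = 1 :=
        ⟨1, one_mem _, rfl⟩
      have r10 := hstep σ₀ h0m 1 10 (by rw [hσ₀]; decide) r1
      have r2 := hstep σ₁ h1m 1 2 (by rw [hσ₁]; decide) r1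
      have r11 := hstep σ₁ h1m 10 11 (by rw [hσ₁]; decide) r10
      have r21 := hstep σ₀ h0m 2 21 (by rw [hσ₀]; decide) r2
      have r3 := hstep σ₁ h1m 2 3 (by rw [hσ₁]; decide) r2
      have r14 := hstep σ₀ h0m 11 14 (by rw [hσ₀]; decide) r11
      have r12 := hstep σ₁ h1m 11 12 (by rw [hσ₁]; decide) r11
      have r22 := hstep σ₁ h1m 21 22 (by rw [hσ₁]; decide) r21
      have r17 := hstep σ₀ h0m 3 17 (by rw [hσ₀]; decide) r3
      have r4 := hstep σ₁ h1m 3 4 (by rw [hσ₁]; decide) r3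
      have r15 := hstep σ₁ h1m 14 15 (by rw [hσ₁]; decide) r14
      have r26 := hstep σ₀ h0m 12 26 (by rw [hσ₀]; decide) r12
      have r9 := hstep σ₁ h1m 12 9 (by rw [hσ₁]; decide) r12
      have r23 := hstep σ₁ h1m 22 23 (by rw [hσ₁]; decide) r22
      have r18 := hstep σ₁ h1m 17 18 (by rw [hσ₁]; decide) r17
      have r5 := hstep σ₀ h0m 4 5 (by rw [hσ₀]; decide) r4
      have r8 := hstep σ₀ h0m 15 8 (by rw [hσ₀]; decide) r15
      have r16 := hstep σ₁ h1m 15 16 (by rw [hσ₁]; decide) r15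
      have r27 := hstep σ₁ h1m 26 27 (by rw [hσ₁]; decide) r26
      have r38 := hstep σ₀ h0m 23 38 (by rw [hσ₀]; decide) r23
      have r24 := hstep σ₁ h1m 23 24 (by rw [hσ₁]; decide) r23
      have r33 := hstep σ₀ h0m 18 33 (by rw [hσ₀]; decide) r18
      have r19 := hstep σ₁ h1m 18 19 (by rw [hσ₁]; decide) r18
      have r6 := hstep σ₁ h1m 5 6 (by rw [hσ₁]; decide) r5
      have r30 := hstep σ₀ h0m 16 30 (by rw [hσ₀]; decide) r16
      have r13 := hstep σ₁ h1m 16 13 (by rw [hσ₁]; decide) r16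
      have r28 := hstep σ₁ h1m 27 28 (by rw [hσ₁]; decide) r27
      have r39 := hstep σ₁ h1m 38 39 (by rw [hσ₁]; decide) r38
      have r34 := hstep σ₀ h0m 24 34 (by rw [hσ₀]; decide) r24
      have r47 := hstep σ₀ h0m 19 47 (by rw [hσ₀]; decide) r19
      have r20 := hstep σ₁ h1m 19 20 (by rw [hσ₁]; decide) r19
      have r7 := hstep σ₁ h1m 6 7 (by rw [hσ₁]; decide) r6
      have r31 := hstep σ₁ h1m 30 31 (by rw [hσ₁]; decide) r30
      have r42 := hstep σ₀ h0m 28 42 (by rw [hσ₀]; decide) r28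
      have r25 := hstep σ₁ h1m 28 25 (by rw [hσ₁]; decide) r28
      have r40 := hstep σ₁ h1m 39 40 (by rw [hσ₁]; decide) r39
      have r35 := hstep σ₁ h1m 34 35 (by rw [hσ₁]; decide) r34
      have r48 := hstep σ₁ h1m 47 48 (by rw [hσ₁]; decide) r47
      have r32 := hstep σ₁ h1m 31 32 (by rw [hσ₁]; decide) r31
      have r43 := hstep σ₁ h1m 42 43 (by rw [hσ₁]; decide) r42
      have r41 := hstep σ₀ h0m 40 41 (by rw [hσ₀]; decide) r40
      have r37 := hstep σ₁ h1m 40 37 (by rw [hσ₁]; decide) r40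
      have r36 := hstep σ₁ h1m 35 36 (by rw [hσ₁]; decide) r35
      have r45 := hstep σ₁ h1m 48 45 (by rw [hσ₁]; decide) r48
      have r46 := hstep σ₀ h0m 32 46 (by rw [hσ₀]; decide) r32
      have r29 := hstep σ₁ h1m 32 29 (by rw [hσ₁]; decide) r32
      have r44 := hstep σ₁ h1m 43 44 (by rw [hσ₁]; decide) r43
      intro n hn
      rw [Finset.mem_Icc] at hn
      obtain ⟨h1, h2⟩ := hn
      interval_cases n <;> assumption
    intro a ha b hb
    obtain ⟨g, hg, hg1⟩ := hr a ha
    obtain ⟨k, hk, hk1⟩ := hr b hb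
    exact ⟨k * g⁻¹, mul_mem hk (inv_mem hg), by
      rw [Equiv.Perm.mul_apply, ← hg1, Equiv.Perm.inv_def, Equiv.symm_apply_apply, hk1]⟩
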